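/- Let e₁, e₂, e₃ denote the standard orthonormal basis of ℝ³. Consider the pairs of position-orientations (p₁, p₂) = ((0, e₃), (e₁, e₂)) and (q₁, q₂) = ((0, e₃), (e₁, e₁)) in M₃ × M₃. Then the three Bekkers invariants agree on the two pairs: κ₁(p₁,p₂) = κ₁(q₁,q₂) = 0, κ₂(p₁,p₂) = κ₂(q₁,q₂) = 1, κ₃(p₁,p₂) = κ₃(q₁,q₂) = π/2; yet there is no t ∈ ℝ³ and no linear isometry equivalence Q of ℝ³ such that t + Q·0 = 0, Q e₃ = e₃, t + Q e₁ = e₁, and Q e₂ = e₁. Hence the two pairs lie in different E(3) orbits despite having equal Bekkers invariants. -/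

import Mathlib

open scoped RealInnerProductSpace

open Real in
/-- The Bekkers invariants `κ₁, κ₂, κ₃` agree on the two pairs of position-orientations
`(p₁, p₂) = ((0, e₃), (e₁, e₂))` and `(q₁, q₂) = ((0, e₃), (e₁, e₁))`, yet the two pairs
are not related by any Euclidean motion `(t, Q)`: the Bekkers invariants are not
universal. -/
theorem bekkers_invariants_agree_but_different_orbits :
    ∀ e₁ e₂ e₃ : EuclideanSpace ℝ (Fin 3),
      e₁ = EuclideanSpace.single 0 1 → e₂ = EuclideanSpace.single 1 1 →
      e₃ = EuclideanSpace.single 2 1 →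
      -- κ₁ on (p₁,p₂) and on (q₁,q₂)
      ⟪e₁ - (0 : EuclideanSpace ℝ (Fin 3)), e₃⟫ = 0 ∧
      ⟪e₁ - (0 : EuclideanSpace ℝ (Fin 3)), e₃⟫ = 0 ∧
      -- κ₂ on (p₁,p₂) and on (q₁,q₂)
      ‖(e₁ - (0 : EuclideanSpace ℝ (Fin 3))) -
        ⟪e₁ - (0 : EuclideanSpace ℝ (Fin 3)), e₃⟫ • e₃‖ = 1 ∧
      ‖(e₁ - (0 : EuclideanSpace ℝ (Fin 3))) -
        ⟪e₁ - (0 : EuclideanSpace ℝ (Fin 3)), e₃⟫ • e₃‖ = 1 ∧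
      -- κ₃ on (p₁,p₂) and on (q₁,q₂)
      arccos ⟪e₃, e₂⟫ = π / 2 ∧
      arccos ⟪e₃, e₁⟫ = π / 2 ∧
      -- but the two pairs are in different E(3) orbits
      ¬ ∃ (t : EuclideanSpace ℝ (Fin 3))
          (Q : EuclideanSpace ℝ (Fin 3) ≃ₗᵢ[ℝ] EuclideanSpace ℝ (Fin 3)),
          t + Q 0 = 0 ∧ Q e₃ = e₃ ∧ t + Q e₁ = e₁ ∧ Q e₂ = e₁ := by
  intro e₁ e₂ e₃ h1 h2 h3
  subst h1 h2 h3
  have hinner13 : ⟪(EuclideanSpace.single 0 1 : EuclideanSpace ℝ (Fin 3)),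
      EuclideanSpace.single 2 1⟫ = 0 := by
    rw [EuclideanSpace.inner_single_left]; simp [EuclideanSpace.single_apply]
  have hinner32 : ⟪(EuclideanSpace.single 2 1 : EuclideanSpace ℝ (Fin 3)),
      EuclideanSpace.single 1 1⟫ = 0 := by
    rw [EuclideanSpace.inner_single_left]; simp [EuclideanSpace.single_apply]
  have hinner31 : ⟪(EuclideanSpace.single 2 1 : EuclideanSpace ℝ (Fin 3)),
      EuclideanSpace.single 0 1⟫ = 0 := by
    rw [EuclideanSpace.inner_single_left]; simp [EuclideanSpace.single_apply]
  have hne : (EuclideanSpace.single 0 1 : EuclideanSpace ℝ (Fin 3)) ≠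
      EuclideanSpace.single 1 1 := by
    intro h
    have := congrArg (fun f : EuclideanSpace ℝ (Fin 3) => f 0) h
    simp [EuclideanSpace.single_apply] at this
  refine ⟨by simp [hinner13], by simp [hinner13], ?_, ?_, by simp [hinner32, Real.arccos_zero],
    by simp [hinner31, Real.arccos_zero], ?_⟩
  · simp [hinner13, EuclideanSpace.norm_single]
  · simp [hinner13, EuclideanSpace.norm_single]
  · rintro ⟨t, Q, ht0, -, hQ1, hQ2⟩
    have ht : t = 0 := by simpa using ht0
    subst ht
    have h1 : Q (EuclideanSpace.single 0 1) = EuclideanSpace.single 0 1 := by simpa using hQ1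
    exact hne (Q.injective (h1.trans hQ2.symm))
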